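/- The function p satisfies: (a) for every ε > 0 there is η > 0 such that |1 − p(θ₁,θ₂)| ≤ ε whenever max{|θ₁|,|θ₂|} ≤ η (continuity of p at (0,0) with value 1); (b) p(θ₁,θ₂) ≥ 1/2 for all (θ₁,θ₂) ∈ [−π/8, π/8]²; (c) p(θ₁,θ₂) ≤ 3/2 for all (θ₁,θ₂) ∈ [−π/2, π/2]²; (d) there exists a constant c_p ∈ ℝ such that p(θ₁,θ₂) ≥ c_p for all (θ₁,θ₂) ∈ [−π, π]² (Lemma 3.1). -/

import Mathlib

open Real Finset

noncomputable section

/-- `Kof ε` is the largest integer `K` with `K * ε < 1`. -/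
def Kof (ε : ℝ) : ℤ := ⌈1 / ε⌉ - 1

/-- Index set of the lattice `[0,1)² ∩ εℤ²`. -/
def Idx (ε : ℝ) : Finset (ℤ × ℤ) :=
  Finset.Icc 0 (Kof ε) ×ˢ Finset.Icc 0 (Kof ε)

/-- Indices `(i,j)` with `i + 2 ≤ K`. -/
def IdxH (ε : ℝ) : Finset (ℤ × ℤ) :=
  Finset.Icc 0 (Kof ε - 2) ×ˢ Finset.Icc 0 (Kof ε)

/-- Indices `(i,j)` with `j + 2 ≤ K`. -/
def IdxV (ε : ℝ) : Finset (ℤ × ℤ) :=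
  Finset.Icc 0 (Kof ε) ×ˢ Finset.Icc 0 (Kof ε - 2)

/-- Squared Euclidean norm on `ℝ × ℝ`. -/
def sqnorm (v : ℝ × ℝ) : ℝ := v.1 ^ 2 + v.2 ^ 2

/-- Euclidean scalar product on `ℝ × ℝ`. -/
def dotp (a b : ℝ × ℝ) : ℝ := a.1 * b.1 + a.2 * b.2

/-- Cross product `a × b = a₁b₂ − a₂b₁`. -/
def crossp (a b : ℝ × ℝ) : ℝ := a.1 * b.2 - a.2 * b.1

/-- sign with convention `sign 0 = -1`. -/
def sgn (x : ℝ) : ℝ := if 0 < x then 1 else -1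

/-- A spin field: unit vectors on the lattice. -/
def IsSpin (ε : ℝ) (u : ℤ × ℤ → ℝ × ℝ) : Prop :=
  ∀ p ∈ Idx ε, sqnorm (u p) = 1

/-- Spin fields with ferromagnetic Dirichlet boundary condition on the left boundary. -/
def InS0 (ε : ℝ) (u : ℤ × ℤ → ℝ × ℝ) : Prop :=
  IsSpin ε u ∧ ∀ j ∈ Finset.Icc (0 : ℤ) (Kof ε), u (0, j) = (0, 1)

/-- Horizontal part of the energy. -/
def Ehor (ε δ : ℝ) (u : ℤ × ℤ → ℝ × ℝ) : ℝ :=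
  ε ^ 2 / 2 * ∑ p ∈ IdxH ε,
    sqnorm (u p - (2 * (1 - δ)) • u (p.1 + 1, p.2) + u (p.1 + 2, p.2))

/-- Vertical part of the energy. -/
def Ever (ε δ : ℝ) (u : ℤ × ℤ → ℝ × ℝ) : ℝ :=
  ε ^ 2 / 2 * ∑ p ∈ IdxV ε,
    sqnorm (u p - (2 * (1 - δ)) • u (p.1, p.2 + 1) + u (p.1, p.2 + 2))

/-- The total energy `E_{ε,δ}`. -/
def E (ε δ : ℝ) (u : ℤ × ℤ → ℝ × ℝ) : ℝ := Ehor ε δ u + Ever ε δ u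

/-- The scaling function `s(ε,δ)`. -/
def sfun (ε δ : ℝ) : ℝ :=
  min (δ ^ 2)
    (min (ε * (δ * Real.sqrt δ) * (|Real.log (ε / Real.sqrt δ)| + 1)) (ε * Real.sqrt δ))

/-- Horizontal angular velocity of a spin field. -/
def thetaH (u : ℤ × ℤ → ℝ × ℝ) (p : ℤ × ℤ) : ℝ :=
  sgn (crossp (u p) (u (p.1 + 1, p.2))) * Real.arccos (dotp (u p) (u (p.1 + 1, p.2)))

/-- Vertical angular velocity of a spin field. -/
def thetaV (u : ℤ × ℤ → ℝ × ℝ) (p : ℤ × ℤ) : ℝ :=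
  sgn (crossp (u p) (u (p.1, p.2 + 1))) * Real.arccos (dotp (u p) (u (p.1, p.2 + 1)))

/-- The function `p` of Lemma 3.1. -/
def pfun (θ₁ θ₂ : ℝ) : ℝ :=
  if θ₁ = θ₂ then 1
  else (Real.sin θ₁ ^ 2 + Real.sin θ₂ ^ 2 - (1 - Real.cos (θ₁ + θ₂))) /
    (2 * (Real.sin (θ₂ / 2) - Real.sin (θ₁ / 2)) ^ 2)

end


open Real in
private lemma cos_quarter_ne (θ₁ θ₂ : ℝ) (h : Real.sin (θ₂ / 2) ≠ Real.sin (θ₁ / 2)) :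
    Real.sin ((θ₂ - θ₁) / 4) ≠ 0 ∧ Real.cos ((θ₁ + θ₂) / 4) ≠ 0 := by
  have hD : Real.sin (θ₂ / 2) - Real.sin (θ₁ / 2)
      = 2 * Real.sin ((θ₂ - θ₁) / 4) * Real.cos ((θ₁ + θ₂) / 4) := by
    rw [Real.sin_sub_sin, show (θ₂ / 2 - θ₁ / 2) / 2 = (θ₂ - θ₁) / 4 by ring,
      show (θ₂ / 2 + θ₁ / 2) / 2 = (θ₁ + θ₂) / 4 by ring]
  have hD0 : Real.sin (θ₂ / 2) - Real.sin (θ₁ / 2) ≠ 0 := sub_ne_zero.mpr h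
  rw [hD] at hD0
  constructor
  · intro h0; apply hD0; rw [h0]; ring
  · intro h0; apply hD0; rw [h0]; ring

/-- Key representation of `pfun` away from the diagonal. -/
private lemma pfun_eq (θ₁ θ₂ : ℝ) (h : Real.sin (θ₂ / 2) ≠ Real.sin (θ₁ / 2)) :
    pfun θ₁ θ₂ = Real.cos (θ₁ + θ₂) * Real.cos ((θ₁ - θ₂) / 4) ^ 2 /
      Real.cos ((θ₁ + θ₂) / 4) ^ 2 := by
  obtain ⟨hq, hc⟩ := cos_quarter_ne θ₁ θ₂ h
  have hne : θ₁ ≠ θ₂ := by rintro rfl; exact h rfl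
  have hD : Real.sin (θ₂ / 2) - Real.sin (θ₁ / 2)
      = 2 * Real.sin ((θ₂ - θ₁) / 4) * Real.cos ((θ₁ + θ₂) / 4) := by
    rw [Real.sin_sub_sin, show (θ₂ / 2 - θ₁ / 2) / 2 = (θ₂ - θ₁) / 4 by ring,
      show (θ₂ / 2 + θ₁ / 2) / 2 = (θ₁ + θ₂) / 4 by ring]
  have hhalf : Real.sin ((θ₁ - θ₂) / 2)
      = 2 * Real.sin ((θ₁ - θ₂) / 4) * Real.cos ((θ₁ - θ₂) / 4) := by
    rw [show (θ₁ - θ₂) / 2 = 2 * ((θ₁ - θ₂) / 4) by ring, Real.sin_two_mul]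
  have hNum : Real.sin θ₁ ^ 2 + Real.sin θ₂ ^ 2 - (1 - Real.cos (θ₁ + θ₂))
      = 2 * Real.cos (θ₁ + θ₂) * Real.sin ((θ₁ - θ₂) / 2) ^ 2 := by
    have hs : Real.sin ((θ₁ - θ₂) / 2) ^ 2 = 1 / 2 - Real.cos (θ₁ - θ₂) / 2 := by
      rw [Real.sin_sq_eq_half_sub, show 2 * ((θ₁ - θ₂) / 2) = θ₁ - θ₂ by ring]
    rw [hs, Real.cos_sub, Real.cos_add]
    have h1 := Real.sin_sq_add_cos_sq θ₁
    have h2 := Real.sin_sq_add_cos_sq θ₂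
    linear_combination (Real.cos θ₂ ^ 2) * h1 + (1 - Real.sin θ₁ ^ 2) * h2
  have hsodd : Real.sin ((θ₂ - θ₁) / 4) = - Real.sin ((θ₁ - θ₂) / 4) := by
    rw [← Real.sin_neg]; congr 1; ring
  rw [pfun, if_neg hne, hD, hNum, hhalf, hsodd]
  have hq' : Real.sin ((θ₁ - θ₂) / 4) ≠ 0 := by
    intro h0; apply hq; rw [hsodd, h0, neg_zero]
  field_simp

private lemma cos_sq_quarter (s : ℝ) :
    Real.cos s = 2 * (2 * Real.cos (s / 4) ^ 2 - 1) ^ 2 - 1 := by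
  have e1 := Real.cos_two_mul (s / 2)
  have e2 := Real.cos_two_mul (s / 4)
  rw [show 2 * (s / 2) = s by ring] at e1
  rw [show 2 * (s / 4) = s / 2 by ring] at e2
  rw [e1, e2]

private lemma sin_half_ne (θ₁ θ₂ : ℝ) (h1 : θ₁ ∈ Set.Icc (-π) π)
    (h2 : θ₂ ∈ Set.Icc (-π) π) (hne : θ₁ ≠ θ₂) :
    Real.sin (θ₂ / 2) ≠ Real.sin (θ₁ / 2) := by
  intro he
  apply hne
  have m1 : θ₁ / 2 ∈ Set.Icc (-(π / 2)) (π / 2) := by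
    constructor <;> [linarith [h1.1]; linarith [h1.2]]
  have m2 : θ₂ / 2 ∈ Set.Icc (-(π / 2)) (π / 2) := by
    constructor <;> [linarith [h2.1]; linarith [h2.2]]
  have := Real.injOn_sin m2 m1 he
  linarith

set_option maxHeartbeats 2000000 in
/-- Lemma 3.1: properties of the function `p`. -/
theorem pfun_properties :
    (∀ ε : ℝ, 0 < ε → ∃ η : ℝ, 0 < η ∧ ∀ θ₁ θ₂ : ℝ,
        max |θ₁| |θ₂| ≤ η → |1 - pfun θ₁ θ₂| ≤ ε) ∧
    (∀ θ₁ θ₂ : ℝ, θ₁ ∈ Set.Icc (-(π / 8)) (π / 8) → θ₂ ∈ Set.Icc (-(π / 8)) (π / 8) →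
        1 / 2 ≤ pfun θ₁ θ₂) ∧
    (∀ θ₁ θ₂ : ℝ, θ₁ ∈ Set.Icc (-(π / 2)) (π / 2) → θ₂ ∈ Set.Icc (-(π / 2)) (π / 2) →
        pfun θ₁ θ₂ ≤ 3 / 2) ∧
    (∃ cp : ℝ, ∀ θ₁ θ₂ : ℝ, θ₁ ∈ Set.Icc (-π) π → θ₂ ∈ Set.Icc (-π) π →
        cp ≤ pfun θ₁ θ₂) := by
  have hpi : π < 3.15 := Real.pi_lt_d2
  have hpi3 : 3 < π := Real.pi_gt_three
  refine ⟨?_, ?_, ?_, ?_⟩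
  · -- (a) continuity at 0
    intro ε hε
    obtain ⟨η, hη1, hη2, hηpos⟩ : ∃ η : ℝ, η ≤ 1/2 ∧ η ≤ ε/5 ∧ 0 < η :=
      ⟨min (1/2) (ε/5), min_le_left _ _, min_le_right _ _, by positivity⟩
    refine ⟨η, hηpos, ?_⟩
    intro θ₁ θ₂ hmax
    have ha1 := abs_le.mp (le_trans (le_max_left _ _) hmax)
    have ha2 := abs_le.mp (le_trans (le_max_right _ _) hmax)
    by_cases hne : θ₁ = θ₂
    · subst hne; rw [pfun, if_pos rfl]; simpa using hε.le
    · have hm1 : θ₁ ∈ Set.Icc (-π) π := ⟨by linarith [ha1.1], by linarith [ha1.2]⟩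
      have hm2 : θ₂ ∈ Set.Icc (-π) π := ⟨by linarith [ha2.1], by linarith [ha2.2]⟩
      rw [pfun_eq θ₁ θ₂ (sin_half_ne θ₁ θ₂ hm1 hm2 hne)]
      set s : ℝ := θ₁ + θ₂ with hs_def
      set d : ℝ := (θ₁ - θ₂) / 4 with hd_def
      have hs2 : s ^ 2 ≤ 1 := by nlinarith [ha1.1, ha1.2, ha2.1, ha2.2]
      have hs2η : s ^ 2 ≤ 4 * η ^ 2 := by
        nlinarith [ha1.1, ha1.2, ha2.1, ha2.2]
      have hd2 : d ^ 2 ≤ η ^ 2 / 4 := by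
        nlinarith [ha1.1, ha1.2, ha2.1, ha2.2]
      have hd2' : d ^ 2 ≤ 1 / 16 := by nlinarith
      have hcs_lb : 1 - s ^ 2 / 2 ≤ Real.cos s := Real.one_sub_sq_div_two_le_cos
      have hcs_ub : Real.cos s ≤ 1 := Real.cos_le_one s
      have hcd_lb : 1 - d ^ 2 / 2 ≤ Real.cos d := Real.one_sub_sq_div_two_le_cos
      have hcd2_lb : 1 - d ^ 2 ≤ Real.cos d ^ 2 := by nlinarith
      have hcd2_ub : Real.cos d ^ 2 ≤ 1 := Real.cos_sq_le_one d
      have hc_lb : 1 - s ^ 2 / 32 ≤ Real.cos (s / 4) := by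
        have := Real.one_sub_sq_div_two_le_cos (x := s / 4)
        nlinarith [this]
      have hc_ub : Real.cos (s / 4) ≤ 1 := Real.cos_le_one _
      have hc2_lb : 15 / 16 ≤ Real.cos (s / 4) ^ 2 := by nlinarith
      have hc2_ub : Real.cos (s / 4) ^ 2 ≤ 1 := Real.cos_sq_le_one _
      have hc2pos : 0 < Real.cos (s / 4) ^ 2 := by linarith
      have heq : 1 - Real.cos s * Real.cos d ^ 2 / Real.cos (s / 4) ^ 2
          = (Real.cos (s / 4) ^ 2 - Real.cos s * Real.cos d ^ 2) / Real.cos (s / 4) ^ 2 := by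
        rw [sub_div, div_self hc2pos.ne']
      rw [heq, abs_div, abs_of_pos hc2pos, div_le_iff₀ hc2pos]
      have hcs_pos : (0:ℝ) ≤ Real.cos s := by nlinarith
      have hprod_lb : (1 - s ^ 2 / 2) * (1 - d ^ 2) ≤ Real.cos s * Real.cos d ^ 2 := by
        have h0 : (0:ℝ) ≤ 1 - d ^ 2 := by nlinarith
        exact mul_le_mul hcs_lb hcd2_lb h0 hcs_pos
      have hprod_ub : Real.cos s * Real.cos d ^ 2 ≤ 1 := by nlinarith
      have habs : |Real.cos (s / 4) ^ 2 - Real.cos s * Real.cos d ^ 2|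
          ≤ 5 / 2 * η ^ 2 := by
        have hη0 : (0:ℝ) ≤ η := hηpos.le
        refine abs_le.mpr ⟨?_, ?_⟩
        · nlinarith
        · nlinarith
      have hηε : 5 / 2 * η ^ 2 ≤ ε / 4 := by
        have hη0 : (0:ℝ) ≤ η := hηpos.le
        nlinarith
      nlinarith [habs, hηε, hc2_lb, hε.le]
  · -- (b) lower bound 1/2 on [-π/8, π/8]²
    intro θ₁ θ₂ h1 h2
    by_cases hne : θ₁ = θ₂
    · subst hne; rw [pfun, if_pos rfl]; norm_num
    · have hm1 : θ₁ ∈ Set.Icc (-π) π := ⟨by linarith [h1.1], by linarith [h1.2]⟩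
      have hm2 : θ₂ ∈ Set.Icc (-π) π := ⟨by linarith [h2.1], by linarith [h2.2]⟩
      rw [pfun_eq θ₁ θ₂ (sin_half_ne θ₁ θ₂ hm1 hm2 hne)]
      set s : ℝ := θ₁ + θ₂ with hs_def
      set d : ℝ := (θ₁ - θ₂) / 4 with hd_def
      have hs2 : s ^ 2 ≤ 0.63 := by
        nlinarith [h1.1, h1.2, h2.1, h2.2]
      have hd2 : d ^ 2 ≤ 0.04 := by
        nlinarith [h1.1, h1.2, h2.1, h2.2]
      have hcs_lb : 1 - s ^ 2 / 2 ≤ Real.cos s := Real.one_sub_sq_div_two_le_cos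
      have hcd_lb : 1 - d ^ 2 / 2 ≤ Real.cos d := Real.one_sub_sq_div_two_le_cos
      have hc2_ub : Real.cos (s / 4) ^ 2 ≤ 1 := Real.cos_sq_le_one _
      have hc_lb : 1 - s ^ 2 / 32 ≤ Real.cos (s / 4) := by
        have := Real.one_sub_sq_div_two_le_cos (x := s / 4)
        nlinarith [this]
      have hc2pos : 0 < Real.cos (s / 4) ^ 2 := by nlinarith
      rw [le_div_iff₀ hc2pos]
      have hcs : (0.685:ℝ) ≤ Real.cos s := by nlinarith
      have hcd : (0.98:ℝ) ≤ Real.cos d := by nlinarith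
      nlinarith [hcs, hcd, hc2_ub]
  · -- (c) upper bound 3/2 on [-π/2, π/2]²
    intro θ₁ θ₂ h1 h2
    by_cases hne : θ₁ = θ₂
    · subst hne; rw [pfun, if_pos rfl]; norm_num
    · have hm1 : θ₁ ∈ Set.Icc (-π) π := ⟨by linarith [h1.1], by linarith [h1.2]⟩
      have hm2 : θ₂ ∈ Set.Icc (-π) π := ⟨by linarith [h2.1], by linarith [h2.2]⟩
      rw [pfun_eq θ₁ θ₂ (sin_half_ne θ₁ θ₂ hm1 hm2 hne)]
      set s : ℝ := θ₁ + θ₂ with hs_def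
      set d : ℝ := (θ₁ - θ₂) / 4 with hd_def
      have hs2 : s ^ 2 ≤ 9.9225 := by
        nlinarith [h1.1, h1.2, h2.1, h2.2]
      have hc_lb : 1 - s ^ 2 / 32 ≤ Real.cos (s / 4) := by
        have := Real.one_sub_sq_div_two_le_cos (x := s / 4)
        nlinarith [this]
      have hclb : (0.689:ℝ) ≤ Real.cos (s / 4) := by nlinarith
      have hc2pos : 0 < Real.cos (s / 4) ^ 2 := by nlinarith
      have hc2_ub : Real.cos (s / 4) ^ 2 ≤ 1 := Real.cos_sq_le_one _
      have hcos : Real.cos s = 2 * (2 * Real.cos (s / 4) ^ 2 - 1) ^ 2 - 1 :=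
        cos_sq_quarter s
      have hcd2_ub : Real.cos d ^ 2 ≤ 1 := Real.cos_sq_le_one d
      rw [div_le_iff₀ hc2pos]
      rcases le_or_gt (Real.cos s) 0 with hcs | hcs
      · have : Real.cos s * Real.cos d ^ 2 ≤ 0 :=
          mul_nonpos_of_nonpos_of_nonneg hcs (sq_nonneg _)
        nlinarith
      · have hA : Real.cos s * Real.cos d ^ 2 ≤ Real.cos s := by
          nlinarith [sq_nonneg (Real.cos d)]
        have ht : (0.474:ℝ) ≤ Real.cos (s / 4) ^ 2 := by nlinarith [hclb]
        nlinarith [hA, hcos, ht, hc2_ub,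
          mul_nonneg (sub_nonneg.2 ht) (sub_nonneg.2 hc2_ub)]
  · -- (d) uniform lower bound on [-π, π]²
    refine ⟨-7, ?_⟩
    intro θ₁ θ₂ h1 h2
    by_cases hne : θ₁ = θ₂
    · subst hne; rw [pfun, if_pos rfl]; norm_num
    · rw [pfun_eq θ₁ θ₂ (sin_half_ne θ₁ θ₂ h1 h2 hne)]
      obtain ⟨-, hc⟩ := cos_quarter_ne θ₁ θ₂ (sin_half_ne θ₁ θ₂ h1 h2 hne)
      set s : ℝ := θ₁ + θ₂ with hs_def
      set d : ℝ := (θ₁ - θ₂) / 4 with hd_def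
      have hc2pos : 0 < Real.cos (s / 4) ^ 2 := by positivity
      have hcos : Real.cos s = 2 * (2 * Real.cos (s / 4) ^ 2 - 1) ^ 2 - 1 :=
        cos_sq_quarter s
      have hcd2_ub : Real.cos d ^ 2 ≤ 1 := Real.cos_sq_le_one d
      rw [le_div_iff₀ hc2pos]
      rcases le_or_gt 0 (Real.cos s) with hcs | hcs
      · have : (0:ℝ) ≤ Real.cos s * Real.cos d ^ 2 := mul_nonneg hcs (sq_nonneg _)
        nlinarith
      · have hA : Real.cos s ≤ Real.cos s * Real.cos d ^ 2 := by
          nlinarith [sq_nonneg (Real.cos d)]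
        have hcs_lb : (-1:ℝ) ≤ Real.cos s := Real.neg_one_le_cos s
        have ht : (1:ℝ) ≤ 7 * Real.cos (s / 4) ^ 2 := by
          nlinarith [sq_nonneg (7 * Real.cos (s / 4) ^ 2 - 1), hcos, hcs]
        nlinarith
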